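/- Let T be an Oppermann–Thomas cluster tilting object in a (d+2)-angulated category 𝒯 as in the Setup. Then 𝒯(T,−) induces an equivalence of categories 𝒯 / [add Σ^d T] ≃ 𝒟, where [add Σ^d T] is the ideal of morphisms factoring through an object of add Σ^d T and 𝒟 is the essential image of 𝒯(T,−). In particular, for a morphism g : X → Y in 𝒯, one has 𝒯(T,g) = 0 if and only if g factors through an object of add Σ^d T. -/
import Mathlib


noncomputable section
open CategoryTheory CategoryTheory.Limits

/-- `Ext^i_R(A,B)` vanishes. -/
def ExtVanish (R : Type) [Ring R] (A B : ModuleCat R) (i : ℕ) : Prop :=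
  Subsingleton (((Ext ℤ (ModuleCat R) i).obj (Opposite.op A)).obj B)

variable (k : Type) [Field k]
variable (𝒯 : Type) [Category.{0} 𝒯] [Preadditive 𝒯]

/-- The category is Hom-finite over `k`. -/
def HomFinite [CategoryTheory.Linear k 𝒯] : Prop :=
  ∀ X Y : 𝒯, FiniteDimensional k (X ⟶ Y)

/-- The right `End T`-module structure (by precomposition) on `T ⟶ X`. -/
instance endOppositeModule (T X : 𝒯) : Module (End T)ᵐᵒᵖ (T ⟶ X) where
  smul m a := m.unop ≫ a
  one_smul a := Category.id_comp a
  mul_smul m n a := by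
    show (n.unop * m.unop) ≫ a = m.unop ≫ n.unop ≫ a
    show (m.unop ≫ n.unop) ≫ a = _
    simp
  smul_zero m := Limits.comp_zero
  smul_add m a b := Preadditive.comp_add _ _ _ _ _ _
  add_smul m n a := Preadditive.add_comp _ _ _ _ _ _
  zero_smul a := Limits.zero_comp

/-- The `Γ`-linear map `𝒯(T,X) → 𝒯(T,Y)` induced by postcomposition with `f : X ⟶ Y`. -/
def postcompHom (T : 𝒯) {X Y : 𝒯} (f : X ⟶ Y) :
    (T ⟶ X) →ₗ[(End T)ᵐᵒᵖ] (T ⟶ Y) where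
  toFun a := a ≫ f
  map_add' a b := Preadditive.add_comp _ _ _ _ _ _
  map_smul' m a := by
    show (m.unop ≫ a) ≫ f = m.unop ≫ (a ≫ f)
    simp

/-- The image of `X` under the functor `𝒯(T,-) : 𝒯 → Mod (End T)ᵐᵒᵖ`. -/
def homMod (T X : 𝒯) : ModuleCat (End T)ᵐᵒᵖ := ModuleCat.of _ (T ⟶ X)

/-- Membership in `add T`: direct summand of a finite direct sum of copies of `T`. -/
def InAdd [HasFiniteBiproducts 𝒯] (T X : 𝒯) : Prop :=
  ∃ (n : ℕ) (s : X ⟶ biproduct (fun _ : Fin n => T))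
    (r : biproduct (fun _ : Fin n => T) ⟶ X), s ≫ r = 𝟙 X

/-- `X` is indecomposable. -/
def Indecomposable' (X : 𝒯) : Prop :=
  ¬ Limits.IsZero X ∧ ∀ e : X ⟶ X, e ≫ e = e → e = 0 ∨ e = 𝟙 X

/-- The functor `𝒯(T,-)` is full onto `Γ`-linear maps. -/
def HomFunctorFull (T : 𝒯) : Prop :=
  ∀ (X Y : 𝒯) (φ : (T ⟶ X) →ₗ[(End T)ᵐᵒᵖ] (T ⟶ Y)), ∃ g : X ⟶ Y, ∀ a, φ a = a ≫ g

/-- The essential image of `𝒯(T,-)` in `mod (End T)ᵐᵒᵖ`. -/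
def EssIm (T : 𝒯) : Set (ModuleCat (End T)ᵐᵒᵖ) :=
  {M | ∃ X : 𝒯, Nonempty (M ≅ homMod 𝒯 T X)}

/-- A Serre functor: an autoequivalence `S` with binatural isomorphisms
`𝒯(Y, SX) ≅ D 𝒯(X,Y)`. -/
structure SerreData [CategoryTheory.Linear k 𝒯] where
  S : 𝒯 ⥤ 𝒯
  equiv : S.IsEquivalence
  ε : ∀ X Y : 𝒯, (Y ⟶ S.obj X) ≃ₗ[k] Module.Dual k (X ⟶ Y)
  nat_left : ∀ {X Y Y' : 𝒯} (g : Y ⟶ Y') (h : Y' ⟶ S.obj X) (f : X ⟶ Y),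
    ε X Y (g ≫ h) f = ε X Y' h (f ≫ g)
  nat_right : ∀ {X X' Y : 𝒯} (u : X ⟶ X') (h : Y ⟶ S.obj X) (f : X' ⟶ Y),
    ε X' Y (h ≫ S.map u) f = ε X Y h (u ≫ f)

/-- A candidate `(d+2)`-angle `X₀ → X₁ → ⋯ → X_{d+1} → Σᵈ X₀`. -/
structure Candidate (Sd : 𝒯 ⥤ 𝒯) (d : ℕ) where
  obj : ℕ → 𝒯
  hom : ∀ n, obj n ⟶ obj (n + 1)
  conn : obj (d + 1) ⟶ Sd.obj (obj 0)

/-- A `(d+2)`-angulated structure on `𝒯`: an auto-equivalence `Σᵈ` together with a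
class of `(d+2)`-angles satisfying (part of) the Geiss–Keller–Oppermann axioms. -/
structure Angulation (d : ℕ) where
  shift : 𝒯 ⥤ 𝒯
  equiv : shift.IsEquivalence
  IsAngle : Candidate 𝒯 shift d → Prop
  comp_zero : ∀ C, IsAngle C → ∀ n, n + 1 ≤ d → C.hom n ≫ C.hom (n + 1) = 0
  conn_zero : ∀ C, IsAngle C → C.hom d ≫ C.conn = 0
  exists_angle : ∀ {A B : 𝒯} (f : A ⟶ B), ∃ C, IsAngle C ∧
    ∃ (eA : C.obj 0 ≅ A) (eB : C.obj 1 ≅ B), C.hom 0 = eA.hom ≫ f ≫ eB.inv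
  hom_exact : ∀ C, IsAngle C → ∀ (W : 𝒯) (n : ℕ), n + 1 ≤ d →
    Function.Exact (fun a : W ⟶ C.obj n => a ≫ C.hom n)
      (fun a : W ⟶ C.obj (n + 1) => a ≫ C.hom (n + 1))
  hom_exact_last : ∀ C, IsAngle C → ∀ W : 𝒯,
    Function.Exact (fun a : W ⟶ C.obj d => a ≫ C.hom d)
      (fun a : W ⟶ C.obj (d + 1) => a ≫ C.conn)

/-- Condition (b) of the paper. -/
def CondB [HasFiniteBiproducts 𝒯] {d : ℕ} (A : Angulation 𝒯 d) (T : 𝒯) : Prop :=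
  ∀ X : 𝒯, Indecomposable' 𝒯 X → (∃ a : T ⟶ X, a ≠ 0) →
    ∃ C, A.IsAngle C ∧ (∀ i, i ≤ d → InAdd 𝒯 T (C.obj i)) ∧
      Nonempty (C.obj (d + 1) ≅ X) ∧ ∀ a : T ⟶ C.obj (d + 1), a ≫ C.conn = 0

/-- `T` is cluster tilting in the sense of Oppermann–Thomas. -/
def OTClusterTilting (𝒯 : Type) [Category.{0} 𝒯] [Preadditive 𝒯] [HasFiniteBiproducts 𝒯]
    {d : ℕ} (A : Angulation 𝒯 d) (T : 𝒯) : Prop :=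
  (∀ a : T ⟶ A.shift.obj T, a = 0) ∧
  ∀ X : 𝒯, ∃ C, A.IsAngle C ∧ (∀ i, i ≤ d → InAdd 𝒯 T (C.obj i)) ∧
    Nonempty (C.obj (d + 1) ≅ X)

/-! ### Auxiliary lemmas -/

section Aux

/-- A linear functional vanishing on the kernel of `P` factors through `P`. -/
lemma exists_dual_factor {k : Type} [Field k] {V V' : Type} [AddCommGroup V] [AddCommGroup V']
    [Module k V] [Module k V'] (P : V →ₗ[k] V') (f : V →ₗ[k] k)
    (h : ∀ x, P x = 0 → f x = 0) : ∃ ξ : V' →ₗ[k] k, ∀ x, ξ (P x) = f x := by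
  have hker : LinearMap.ker P ≤ LinearMap.ker f := fun x hx => h x hx
  obtain ⟨ξ, hξ⟩ := LinearMap.exists_extend
    (((LinearMap.ker P).liftQ f hker).comp (P.quotKerEquivRange.symm.toLinearMap))
  refine ⟨ξ, fun x => ?_⟩
  have h1 : ξ (P x) = (ξ.comp (LinearMap.range P).subtype)
      ⟨P x, LinearMap.mem_range_self P x⟩ := rfl
  rw [h1, hξ]
  have h2 : P.quotKerEquivRange.symm ⟨P x, LinearMap.mem_range_self P x⟩
      = (LinearMap.ker P).mkQ x := P.quotKerEquivRange_symm_apply_image x _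
  simp only [LinearMap.comp_apply, LinearEquiv.coe_toLinearMap, h2, Submodule.mkQ_apply,
    Submodule.liftQ_apply]

variable {𝒯 : Type} [Category.{0} 𝒯] [Preadditive 𝒯]

/-- Weak cokernel property obtained from Serre duality and covariant exactness. -/
lemma serre_weak_cokernel {k : Type} [Field k] [CategoryTheory.Linear k 𝒯]
    (SD : SerreData k 𝒯) {M₀ M₁ M₂ Y : 𝒯} (p : M₀ ⟶ M₁) (q : M₁ ⟶ M₂) {W : 𝒯}
    (j : SD.S.obj W ≅ Y)
    (hex : Function.Exact (fun a : W ⟶ M₀ => a ≫ p) (fun a : W ⟶ M₁ => a ≫ q))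
    (w : M₁ ⟶ Y) (hw : p ≫ w = 0) : ∃ g : M₂ ⟶ Y, q ≫ g = w := by
  set f : Module.Dual k (W ⟶ M₁) := SD.ε W M₁ (w ≫ j.inv) with hf
  have hker : ∀ a : W ⟶ M₁, (CategoryTheory.Linear.rightComp k W q) a = 0 → f a = 0 := by
    intro a ha
    have ha' : a ≫ q = 0 := ha
    obtain ⟨b, hb⟩ := (hex a).mp ha'
    have hnat := SD.nat_left p (w ≫ j.inv) b
    have hz : p ≫ w ≫ j.inv = 0 := by
      rw [← Category.assoc, hw, Limits.zero_comp]
    rw [hz] at hnat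
    simp only [map_zero, LinearMap.zero_apply] at hnat
    rw [hf, ← hb]
    exact hnat.symm
  obtain ⟨ξ, hξ⟩ := exists_dual_factor (CategoryTheory.Linear.rightComp k W q) f hker
  refine ⟨((SD.ε W M₂).symm ξ) ≫ j.hom, ?_⟩
  have hinj : Function.Injective (SD.ε W M₁) := (SD.ε W M₁).injective
  have hgj : (((SD.ε W M₂).symm ξ) ≫ j.hom) ≫ j.inv = (SD.ε W M₂).symm ξ := by
    simp
  have h1 : SD.ε W M₁ ((q ≫ ((SD.ε W M₂).symm ξ) ≫ j.hom) ≫ j.inv)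
      = SD.ε W M₁ (w ≫ j.inv) := by
    apply LinearMap.ext
    intro a
    have hassoc : (q ≫ ((SD.ε W M₂).symm ξ) ≫ j.hom) ≫ j.inv
        = q ≫ (SD.ε W M₂).symm ξ := by
      simp
    rw [hassoc]
    have hnat := SD.nat_left q ((SD.ε W M₂).symm ξ) a
    rw [hnat, LinearEquiv.apply_symm_apply]
    exact hξ a
  have h2 := hinj h1
  have := congrArg (fun t => t ≫ j.hom) h2
  simpa using this
  
variable [HasFiniteBiproducts 𝒯]

/-- A morphism out of an object of `add T` vanishing on all maps from `T` is zero. -/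
lemma zero_of_comp_T_zero {T M N : 𝒯} (h : InAdd 𝒯 T M)
    (c : M ⟶ N) (hc : ∀ a : T ⟶ M, a ≫ c = 0) : c = 0 := by
  obtain ⟨n, s, r, hsr⟩ := h
  have hr : r ≫ c = 0 := by
    apply biproduct.hom_ext'
    intro j
    rw [← Category.assoc, hc (biproduct.ι (fun _ : Fin n => T) j ≫ r), Limits.comp_zero]
  calc c = (s ≫ r) ≫ c := by rw [hsr, Category.id_comp]
    _ = s ≫ (r ≫ c) := Category.assoc _ _ _
    _ = 0 := by rw [hr, Limits.comp_zero]

/-- Maps from `T` to objects of `add Σᵈ T` vanish. -/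
lemma hom_from_T_zero {T ST Z : 𝒯} (hT1 : ∀ a : T ⟶ ST, a = 0)
    (h : InAdd 𝒯 ST Z) (a : T ⟶ Z) : a = 0 := by
  obtain ⟨n, s, r, hsr⟩ := h
  have hs : a ≫ s = 0 := by
    apply biproduct.hom_ext
    intro j
    rw [Category.assoc, hT1 (a ≫ s ≫ biproduct.π (fun _ : Fin n => ST) j), Limits.zero_comp]
  calc a = a ≫ (s ≫ r) := by rw [hsr, Category.comp_id]
    _ = (a ≫ s) ≫ r := (Category.assoc _ _ _).symm
    _ = 0 := by rw [hs, Limits.zero_comp]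

/-- `Γ`-linear maps out of `𝒯(T, M)` for `M ∈ add T` are induced by morphisms. -/
lemma add_full {T M N : 𝒯} (h : InAdd 𝒯 T M)
    (φ : (T ⟶ M) →ₗ[(End T)ᵐᵒᵖ] (T ⟶ N)) :
    ∃ g : M ⟶ N, ∀ a : T ⟶ M, φ a = a ≫ g := by
  obtain ⟨n, s, r, hsr⟩ := h
  have hsm : ∀ (e : T ⟶ T) (x : T ⟶ M), φ (e ≫ x) = e ≫ φ x := by
    intro e x
    exact φ.map_smul (MulOpposite.op e) x
  have key : ∀ b : T ⟶ ⨁ (fun _ : Fin n => T),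
      b ≫ biproduct.desc (fun i => φ (biproduct.ι (fun _ : Fin n => T) i ≫ r))
        = φ (b ≫ r) := by
    intro b
    have hb : b = ∑ i : Fin n, b ≫ (biproduct.π (fun _ : Fin n => T) i ≫
        biproduct.ι (fun _ : Fin n => T) i) := by
      rw [← Preadditive.comp_sum, biproduct.total, Category.comp_id]
    have step : ∀ i : Fin n,
        (b ≫ (biproduct.π (fun _ : Fin n => T) i ≫ biproduct.ι (fun _ : Fin n => T) i)) ≫
          biproduct.desc (fun i => φ (biproduct.ι (fun _ : Fin n => T) i ≫ r))
        = φ ((b ≫ (biproduct.π (fun _ : Fin n => T) i ≫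
            biproduct.ι (fun _ : Fin n => T) i)) ≫ r) := by
      intro i
      have e1 : b ≫ (biproduct.π (fun _ : Fin n => T) i ≫ biproduct.ι (fun _ : Fin n => T) i)
          = (b ≫ biproduct.π (fun _ : Fin n => T) i) ≫ biproduct.ι (fun _ : Fin n => T) i := by
        simp
      rw [e1, Category.assoc, biproduct.ι_desc, ← hsm]
      congr 1
      simp
    conv_lhs => rw [hb]
    rw [Preadditive.sum_comp]
    simp only [step]
    rw [← map_sum, ← Preadditive.sum_comp, ← hb]
  refine ⟨s ≫ biproduct.desc (fun i => φ (biproduct.ι (fun _ : Fin n => T) i ≫ r)),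
    fun a => ?_⟩
  rw [← Category.assoc, key, Category.assoc, hsr, Category.comp_id]

/-- `add T` is stable under additive functors. -/
lemma inAdd_map (F : 𝒯 ⥤ 𝒯) [F.Additive] {T M : 𝒯}
    (h : InAdd 𝒯 T M) : InAdd 𝒯 (F.obj T) (F.obj M) := by
  obtain ⟨n, s, r, hsr⟩ := h
  refine ⟨n, F.map s ≫ biproduct.lift (fun i => F.map (biproduct.π (fun _ : Fin n => T) i)),
    biproduct.desc (fun i => F.map (biproduct.ι (fun _ : Fin n => T) i)) ≫ F.map r, ?_⟩
  have hmid : biproduct.lift (fun i => F.map (biproduct.π (fun _ : Fin n => T) i)) ≫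
      biproduct.desc (fun i => F.map (biproduct.ι (fun _ : Fin n => T) i)) = 𝟙 _ := by
    rw [biproduct.lift_desc]
    have : ∀ j : Fin n, F.map (biproduct.π (fun _ : Fin n => T) j) ≫
        F.map (biproduct.ι (fun _ : Fin n => T) j)
        = F.map (biproduct.π (fun _ : Fin n => T) j ≫ biproduct.ι (fun _ : Fin n => T) j) := by
      intro j; rw [F.map_comp]
    simp only [this]
    rw [← F.map_sum, biproduct.total, F.map_id]
  calc (F.map s ≫ biproduct.lift (fun i => F.map (biproduct.π (fun _ : Fin n => T) i))) ≫
        (biproduct.desc (fun i => F.map (biproduct.ι (fun _ : Fin n => T) i)) ≫ F.map r)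
      = F.map s ≫ (biproduct.lift (fun i => F.map (biproduct.π (fun _ : Fin n => T) i)) ≫
        biproduct.desc (fun i => F.map (biproduct.ι (fun _ : Fin n => T) i))) ≫ F.map r := by
        simp only [Category.assoc]
    _ = F.map s ≫ F.map r := by rw [hmid, Category.id_comp]
    _ = 𝟙 _ := by rw [← F.map_comp, hsr, F.map_id]

end Aux

/-- If `T` is Oppermann–Thomas cluster tilting, then `𝒯(T,-)` induces an equivalence
`𝒯/[add Σᵈ T] ≃ 𝒟`: the functor is full, and a morphism `g` is killed by `𝒯(T,-)` iff it
factors through an object of `add Σᵈ T`. -/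
theorem quotient_equivalence_of_OT_cluster_tilting
    (k 𝒯 : Type) [Field k] [IsAlgClosed k] [Category.{0} 𝒯] [Preadditive 𝒯]
    [CategoryTheory.Linear k 𝒯] [HasFiniteBiproducts 𝒯] [IsIdempotentComplete 𝒯]
    (d : ℕ) (hd : 1 ≤ d) (hfin : HomFinite k 𝒯) (SD : SerreData k 𝒯)
    (A : Angulation 𝒯 d) (T : 𝒯) (hT : OTClusterTilting 𝒯 A T) :
    HomFunctorFull 𝒯 T ∧
    ∀ (X Y : 𝒯) (g : X ⟶ Y),
      (∀ a : T ⟶ X, a ≫ g = 0) ↔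
        ∃ Z : 𝒯, InAdd 𝒯 (A.shift.obj T) Z ∧ ∃ (u : X ⟶ Z) (v : Z ⟶ Y), g = u ≫ v := by
  haveI := A.equiv
  haveI := SD.equiv
  haveI : HasBinaryBiproducts 𝒯 := hasBinaryBiproducts_of_finite_biproducts 𝒯
  haveI : Limits.PreservesBinaryBiproducts A.shift :=
    Limits.preservesBinaryBiproducts_of_preservesBinaryProducts A.shift
  haveI : (A.shift).Additive := Functor.additive_of_preservesBinaryBiproducts A.shift
  obtain ⟨hT1, hT2⟩ := hT
  obtain ⟨m, rfl⟩ : ∃ m, d = m + 1 := ⟨d - 1, by omega⟩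
  constructor
  · -- fullness
    intro X Y φ
    obtain ⟨C, hC, hadd, ⟨e⟩⟩ := hT2 X
    have j : SD.S.obj (SD.S.objPreimage Y) ≅ Y := SD.S.objObjPreimageIso Y
    obtain ⟨g₁, hg₁⟩ := add_full (hadd (m + 1) le_rfl)
      (φ.comp (postcompHom 𝒯 T (C.hom (m + 1) ≫ e.hom)))
    have hg₁' : ∀ b : T ⟶ C.obj (m + 1), φ (b ≫ (C.hom (m + 1) ≫ e.hom)) = b ≫ g₁ := by
      intro b
      exact hg₁ b
    have hzero : C.hom m ≫ g₁ = 0 := by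
      apply zero_of_comp_T_zero (hadd m (by omega))
      intro a
      have h0 : (a ≫ C.hom m) ≫ (C.hom (m + 1) ≫ e.hom) = 0 := by
        rw [Category.assoc, ← Category.assoc (C.hom m), A.comp_zero C hC m le_rfl,
          Limits.zero_comp, Limits.comp_zero]
      rw [← Category.assoc, ← hg₁' (a ≫ C.hom m), h0, map_zero]
    obtain ⟨g₂, hg₂⟩ := serre_weak_cokernel SD (C.hom m) (C.hom (m + 1)) j
      (A.hom_exact C hC (SD.S.objPreimage Y) m le_rfl) g₁ hzero
    refine ⟨e.inv ≫ g₂, fun a => ?_⟩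
    have hconn : (a ≫ e.inv) ≫ C.conn = 0 :=
      hom_from_T_zero hT1 (inAdd_map A.shift (hadd 0 (by omega))) ((a ≫ e.inv) ≫ C.conn)
    obtain ⟨b, hb0⟩ := (A.hom_exact_last C hC T (a ≫ e.inv)).mp hconn
    have hb : b ≫ C.hom (m + 1) = a ≫ e.inv := hb0
    have ha : a = b ≫ (C.hom (m + 1) ≫ e.hom) := by
      rw [← Category.assoc, hb, Category.assoc, e.inv_hom_id, Category.comp_id]
    calc φ a = φ (b ≫ (C.hom (m + 1) ≫ e.hom)) := by rw [← ha]
      _ = b ≫ g₁ := hg₁' b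
      _ = b ≫ (C.hom (m + 1) ≫ g₂) := by rw [hg₂]
      _ = (b ≫ C.hom (m + 1)) ≫ g₂ := by rw [Category.assoc]
      _ = (a ≫ e.inv) ≫ g₂ := by rw [hb]
      _ = a ≫ (e.inv ≫ g₂) := by rw [Category.assoc]
  · intro X Y g
    constructor
    · intro hg
      obtain ⟨C, hC, hadd, ⟨e⟩⟩ := hT2 X
      have j : SD.S.obj (SD.S.objPreimage Y) ≅ Y := SD.S.objObjPreimageIso Y
      have hw : C.hom (m + 1) ≫ (e.hom ≫ g) = 0 := by
        apply zero_of_comp_T_zero (hadd (m + 1) le_rfl)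
        intro a
        have : (a ≫ (C.hom (m + 1) ≫ e.hom)) ≫ g = 0 := hg _
        simpa using this
      obtain ⟨v, hv⟩ := serre_weak_cokernel SD (C.hom (m + 1)) C.conn j
        (A.hom_exact_last C hC (SD.S.objPreimage Y)) (e.hom ≫ g) hw
      refine ⟨A.shift.obj (C.obj 0), inAdd_map A.shift (hadd 0 (by omega)),
        e.inv ≫ C.conn, v, ?_⟩
      rw [Category.assoc, hv, ← Category.assoc, e.inv_hom_id, Category.id_comp]
    · rintro ⟨Z, hZ, u, v, rfl⟩ a
      have hu : a ≫ u = 0 := hom_from_T_zero hT1 hZ (a ≫ u)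
      rw [← Category.assoc, hu, Limits.zero_comp]
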